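/- Among all A ∈ Γ(R₁₁,…,R_kk), the matrix R_m maximizes the Bures-Wasserstein distance to the block-diagonal matrix R₀ = diag(R₁₁,…,R_kk): d_W(A, R₀) ≤ d_W(R_m, R₀). -/

import Mathlib

open Matrix

/-- The positive semidefinite square root `A^{1/2}` of a matrix
(junk value `0` if `A` is not positive semidefinite). -/
noncomputable def msqrt {n : Type*} [Fintype n] [DecidableEq n]
    (A : Matrix n n ℝ) : Matrix n n ℝ := by
  classical exact if h : A.PosSemidef then
    (h.1.eigenvectorUnitary.1 * diagonal (Real.sqrt ∘ h.1.eigenvalues) *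
      (star h.1.eigenvectorUnitary : Matrix n n ℝ)) else 0

/-- The squared Bures-Wasserstein distance
`d_W²(R, S) = tr R + tr S − 2 tr((R^{1/2} S R^{1/2})^{1/2})`. -/
noncomputable def dWsq {n : Type*} [Fintype n] [DecidableEq n]
    (R S : Matrix n n ℝ) : ℝ :=
  R.trace + S.trace - 2 * (msqrt (msqrt R * S * msqrt R)).trace

/-- The block matrix `R_m` with diagonal blocks `R_ii = U_ii Λ_ii U_iiᵀ` and off-diagonal
blocks `Ψ_ij = U_ii Λ_ii^{1/2} Π_ij Λ_jj^{1/2} U_jjᵀ`, where `Π_ij ∈ ℝ^{d_i × d_j}` is the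
upper-left block `(I 0)` of the identity.  Entrywise:
`(R_m)_{(i,a),(j,b)} = ∑_{r,s : r = s} U_i[a,r] √(λ_{r,i}) √(λ_{s,j}) U_j[b,s]`. -/
noncomputable def Rmax {k : ℕ} (d : Fin k → ℕ)
    (U : ∀ i, Matrix (Fin (d i)) (Fin (d i)) ℝ) (lam : ∀ i, Fin (d i) → ℝ) :
    Matrix (Σ i, Fin (d i)) (Σ i, Fin (d i)) ℝ :=
  fun p q => ∑ r : Fin (d p.1), ∑ s : Fin (d q.1),
    if (r : ℕ) = (s : ℕ) then
      U p.1 p.2 r * Real.sqrt (lam p.1 r) * Real.sqrt (lam q.1 s) * U q.1 q.2 s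
    else 0

/-- The block-diagonal matrix `R₀ = diag(R₁₁,…,R_kk)` with the same diagonal blocks as
`R_m`. -/
noncomputable def Rzero {k : ℕ} (d : Fin k → ℕ)
    (U : ∀ i, Matrix (Fin (d i)) (Fin (d i)) ℝ) (lam : ∀ i, Fin (d i) → ℝ) :
    Matrix (Σ i, Fin (d i)) (Σ i, Fin (d i)) ℝ :=
  fun p q => if p.1 = q.1 then Rmax d U lam p q else 0

/-- the eigen-decomposition square root of a PSD matrix -/
noncomputable def Matrix.PosSemidef.sqrt {n : Type*} [Fintype n] [DecidableEq n]
    {A : Matrix n n ℝ} (h : A.PosSemidef) : Matrix n n ℝ :=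
  h.1.eigenvectorUnitary.1 * diagonal (Real.sqrt ∘ h.1.eigenvalues) *
    (star h.1.eigenvectorUnitary : Matrix n n ℝ)

section SqrtPort
open scoped MatrixOrder

lemma Matrix.PosSemidef.sqrt_eq_cfcSqrt {n : Type*} [Fintype n] [DecidableEq n]
    {A : Matrix n n ℝ} (h : A.PosSemidef) : h.sqrt = CFC.sqrt A := by
  rw [CFC.sqrt_eq_cfc, cfc_nnreal_eq_real _ A, h.1.cfc_eq]
  simp only [IsHermitian.cfc, Matrix.PosSemidef.sqrt, Unitary.conjStarAlgAut_apply]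
  congr 3
  funext i
  simp [Real.coe_sqrt, Real.coe_toNNReal', max_eq_left (h.eigenvalues_nonneg i)]

lemma Matrix.PosSemidef.sqrt_mul_self {n : Type*} [Fintype n] [DecidableEq n]
    {A : Matrix n n ℝ} (h : A.PosSemidef) : h.sqrt * h.sqrt = A := by
  rw [h.sqrt_eq_cfcSqrt]
  exact CFC.sqrt_mul_sqrt_self A h.nonneg

lemma Matrix.PosSemidef.posSemidef_sqrt {n : Type*} [Fintype n] [DecidableEq n]
    {A : Matrix n n ℝ} (h : A.PosSemidef) : h.sqrt.PosSemidef := by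
  rw [h.sqrt_eq_cfcSqrt]
  exact (CFC.sqrt_nonneg A).posSemidef

lemma Matrix.PosSemidef.eq_sqrt_of_sq_eq {n : Type*} [Fintype n] [DecidableEq n]
    {B A : Matrix n n ℝ} (hB : B.PosSemidef) (h : A.PosSemidef) (hBA : B ^ 2 = A) :
    B = h.sqrt := by
  rw [h.sqrt_eq_cfcSqrt]
  exact (CFC.sqrt_unique (by rw [← hBA, sq]) hB.nonneg).symm

end SqrtPort


private lemma abel_aux (g dd : ℕ → ℝ) (hg : Monotone g)
    (hD : ∀ m, (∑ t ∈ Finset.range m, dd t) ≤ 0) :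
    ∀ n, g n * (∑ t ∈ Finset.range (n+1), dd t) ≤ ∑ t ∈ Finset.range (n+1), g t * dd t := by
  intro n
  induction n with
  | zero => simp
  | succ n ih =>
    rw [Finset.sum_range_succ (f := fun t => g t * dd t)]
    have h1 : (∑ t ∈ Finset.range (n+1+1), dd t)
        = (∑ t ∈ Finset.range (n+1), dd t) + dd (n+1) := Finset.sum_range_succ _ _
    have h2 : g (n+1) * (∑ t ∈ Finset.range (n+1), dd t)
        ≤ g n * (∑ t ∈ Finset.range (n+1), dd t) :=
      mul_le_mul_of_nonpos_right (hg (Nat.le_succ n)) (hD (n+1))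
    rw [h1]
    nlinarith [ih]

private lemma abel_nonneg (g dd : ℕ → ℝ) (hg : Monotone g) (n : ℕ)
    (hD : ∀ m, (∑ t ∈ Finset.range m, dd t) ≤ 0)
    (hn : (∑ t ∈ Finset.range n, dd t) = 0) :
    0 ≤ ∑ t ∈ Finset.range n, g t * dd t := by
  cases n with
  | zero => simp
  | succ n =>
    have := abel_aux g dd hg hD n
    rw [hn] at this
    simpa using this

private lemma lp_bound (D m : ℕ) (a q : ℕ → ℝ)
    (ha0 : ∀ r, 0 ≤ a r) (hamono : ∀ r s : ℕ, r ≤ s → a s ≤ a r)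
    (hq0 : ∀ r, 0 ≤ q r) (hq1 : ∀ r, q r ≤ 1)
    (hqs : (∑ r ∈ Finset.range D, q r) ≤ (m : ℝ)) :
    (∑ r ∈ Finset.range D, a r * q r) ≤ ∑ r ∈ Finset.range (min m D), a r := by
  rcases le_or_gt D m with hDm | hmD
  · rw [min_eq_right hDm]
    refine Finset.sum_le_sum fun r _ => ?_
    exact mul_le_of_le_one_right (ha0 r) (hq1 r)
  · rw [min_eq_left hmD.le]
    have hsplit : (∑ r ∈ Finset.range D, a r * q r)
        = (∑ r ∈ Finset.range m, a r * q r) + ∑ r ∈ Finset.Ico m D, a r * q r := by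
      rw [Finset.range_eq_Ico, Finset.range_eq_Ico, ← Finset.sum_Ico_consecutive _ (Nat.zero_le m) hmD.le]
    have hc0 : 0 ≤ a m := ha0 m
    have b1 : (∑ r ∈ Finset.range m, a r * q r)
        ≤ (∑ r ∈ Finset.range m, a r) + a m * ((∑ r ∈ Finset.range m, q r) - m) := by
      have h1 : (∑ r ∈ Finset.range m, a r * q r)
          ≤ ∑ r ∈ Finset.range m, (a r + a m * (q r - 1)) := by
        refine Finset.sum_le_sum fun r hr => ?_
        have har : a m ≤ a r := hamono r m (Nat.le_of_lt (Finset.mem_range.mp hr))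
        nlinarith [hq1 r, hq0 r]
      have h2 : (∑ r ∈ Finset.range m, (a r + a m * (q r - 1)))
          = (∑ r ∈ Finset.range m, a r) + a m * ((∑ r ∈ Finset.range m, q r) - m) := by
        rw [Finset.sum_add_distrib, ← Finset.mul_sum, Finset.sum_sub_distrib]
        simp
      linarith
    have b2 : (∑ r ∈ Finset.Ico m D, a r * q r) ≤ a m * ∑ r ∈ Finset.Ico m D, q r := by
      rw [Finset.mul_sum]
      refine Finset.sum_le_sum fun r hr => ?_
      exact mul_le_mul_of_nonneg_right (hamono m r (Finset.mem_Ico.mp hr).1) (hq0 r)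
    have hq_split : (∑ r ∈ Finset.range m, q r) + (∑ r ∈ Finset.Ico m D, q r)
        = ∑ r ∈ Finset.range D, q r := by
      rw [Finset.range_eq_Ico, Finset.range_eq_Ico, ← Finset.sum_Ico_consecutive _ (Nat.zero_le m) hmD.le]
    nlinarith [hsplit, b1, b2, hq_split, hqs, hc0]

private lemma sqrt_slope_ineq {a b : ℝ} (ha : 0 < a) (hb : 0 ≤ b) :
    (1/(2*Real.sqrt a)) * (a - b) ≤ Real.sqrt a - Real.sqrt b := by
  have hsa : 0 < Real.sqrt a := Real.sqrt_pos.mpr ha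
  have h1 : Real.sqrt a * Real.sqrt a = a := Real.mul_self_sqrt ha.le
  have h2 : Real.sqrt b * Real.sqrt b = b := Real.mul_self_sqrt hb
  have hsb : 0 ≤ Real.sqrt b := Real.sqrt_nonneg b
  rw [div_mul_eq_mul_div, one_mul, div_le_iff₀ (by linarith)]
  nlinarith [sq_nonneg (Real.sqrt a - Real.sqrt b)]

private lemma schur_sqrt (κ ν : ℕ → ℝ) (n : ℕ)
    (hκ0 : ∀ t, 0 ≤ κ t) (hν0 : ∀ t, 0 ≤ ν t)
    (hκa : ∀ r s : ℕ, r ≤ s → κ s ≤ κ r)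
    (hκn : ∀ t, n ≤ t → κ t = 0) (hνn : ∀ t, n ≤ t → ν t = 0)
    (hmaj : ∀ m, (∑ t ∈ Finset.range m, κ t) ≤ ∑ t ∈ Finset.range m, ν t)
    (htot : (∑ t ∈ Finset.range n, κ t) = ∑ t ∈ Finset.range n, ν t) :
    (∑ t ∈ Finset.range n, Real.sqrt (ν t)) ≤ ∑ t ∈ Finset.range n, Real.sqrt (κ t) := by
  classical
  set C : ℝ := (∑ t ∈ Finset.range n, if ν t = 0 then 0 else 1/Real.sqrt (ν t))
      + (∑ t ∈ Finset.range n, if κ t = 0 then 0 else 1/(2*Real.sqrt (κ t))) with hCdef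
  have hterm1 : ∀ t, (0:ℝ) ≤ (if ν t = 0 then 0 else 1/Real.sqrt (ν t)) := by
    intro t; split
    · norm_num
    · positivity
  have hterm2 : ∀ t, (0:ℝ) ≤ (if κ t = 0 then 0 else 1/(2*Real.sqrt (κ t))) := by
    intro t; split
    · norm_num
    · positivity
  have hCν : ∀ t, t < n → ν t ≠ 0 → 1/Real.sqrt (ν t) ≤ C := by
    intro t htn ht
    have h1 : (if ν t = 0 then 0 else 1/Real.sqrt (ν t))
        ≤ ∑ s ∈ Finset.range n, if ν s = 0 then 0 else 1/Real.sqrt (ν s) :=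
      Finset.single_le_sum (fun i _ => hterm1 i) (Finset.mem_range.mpr htn)
    rw [if_neg ht] at h1
    have h2 : (0:ℝ) ≤ ∑ t ∈ Finset.range n, if κ t = 0 then 0 else 1/(2*Real.sqrt (κ t)) :=
      Finset.sum_nonneg fun i _ => hterm2 i
    linarith
  have hCκ : ∀ t, t < n → κ t ≠ 0 → 1/(2*Real.sqrt (κ t)) ≤ C := by
    intro t htn ht
    have h1 : (if κ t = 0 then 0 else 1/(2*Real.sqrt (κ t)))
        ≤ ∑ s ∈ Finset.range n, if κ s = 0 then 0 else 1/(2*Real.sqrt (κ s)) :=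
      Finset.single_le_sum (fun i _ => hterm2 i) (Finset.mem_range.mpr htn)
    rw [if_neg ht] at h1
    have h2 : (0:ℝ) ≤ ∑ t ∈ Finset.range n, if ν t = 0 then 0 else 1/Real.sqrt (ν t) :=
      Finset.sum_nonneg fun i _ => hterm1 i
    linarith
  set g : ℕ → ℝ := fun t => if κ t = 0 then C else 1/(2*Real.sqrt (κ t)) with hgdef
  have hgmono : Monotone g := by
    intro a b hab
    by_cases ha : κ a = 0
    · have hb : κ b = 0 := le_antisymm (ha ▸ hκa a b hab) (hκ0 b)
      simp [hgdef, ha, hb]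
    · have han : a < n := by
        by_contra h
        exact ha (hκn a (not_lt.mp h))
      by_cases hb : κ b = 0
      · simp only [hgdef, if_neg ha, if_pos hb]
        exact hCκ a han ha
      · simp only [hgdef, if_neg ha, if_neg hb]
        have hkb : 0 < κ b := lt_of_le_of_ne (hκ0 b) (Ne.symm hb)
        have h2b : 0 < 2*Real.sqrt (κ b) := by positivity
        have hsle : Real.sqrt (κ b) ≤ Real.sqrt (κ a) := Real.sqrt_le_sqrt (hκa a b hab)
        exact one_div_le_one_div_of_le h2b (by linarith)
  have hkey : ∀ t ∈ Finset.range n, g t * (κ t - ν t) ≤ Real.sqrt (κ t) - Real.sqrt (ν t) := by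
    intro t htn
    have htn' : t < n := Finset.mem_range.mp htn
    by_cases ha : κ t = 0
    · simp only [hgdef, if_pos ha, ha, Real.sqrt_zero]
      by_cases hb : ν t = 0
      · simp [hb]
      · have hbpos : 0 < ν t := lt_of_le_of_ne (hν0 t) (Ne.symm hb)
        have h1 : 1/Real.sqrt (ν t) ≤ C := hCν t htn' hb
        have h3 : (1/Real.sqrt (ν t)) * ν t = Real.sqrt (ν t) := by
          rw [one_div_mul_eq_div, Real.div_sqrt]
        have h4 : (1/Real.sqrt (ν t)) * ν t ≤ C * ν t :=
          mul_le_mul_of_nonneg_right h1 (hν0 t)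
        rw [h3] at h4
        nlinarith
    · have hap : 0 < κ t := lt_of_le_of_ne (hκ0 t) (Ne.symm ha)
      simp only [hgdef, if_neg ha]
      exact sqrt_slope_ineq hap (hν0 t)
  have habel : 0 ≤ ∑ t ∈ Finset.range n, g t * (κ t - ν t) := by
    refine abel_nonneg g (fun t => κ t - ν t) hgmono n (fun m => ?_) ?_
    · rw [Finset.sum_sub_distrib]
      linarith [hmaj m]
    · rw [Finset.sum_sub_distrib]
      linarith [htot]
  have hsum : (∑ t ∈ Finset.range n, g t * (κ t - ν t))
      ≤ ∑ t ∈ Finset.range n, (Real.sqrt (κ t) - Real.sqrt (ν t)) :=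
    Finset.sum_le_sum hkey
  rw [Finset.sum_sub_distrib] at hsum
  linarith


private lemma conjT_eq_T {a b : Type*} [Fintype a] [Fintype b] (M : Matrix a b ℝ) : Mᴴ = Mᵀ := by
  ext i j; simp [Matrix.conjTranspose_apply]

private lemma sigma_sum {k : ℕ} {d : Fin k → ℕ} (g : (Σ i, Fin (d i)) → ℝ) :
    (∑ x : (Σ i, Fin (d i)), g x) = ∑ i : Fin k, ∑ a : Fin (d i), g ⟨i, a⟩ := by
  rw [← Finset.univ_sigma_univ, Finset.sum_sigma]

private lemma psd_diag_nonneg {ι : Type*} [Fintype ι] [DecidableEq ι] {M : Matrix ι ι ℝ}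
    (hM : M.PosSemidef) (q : ι) : 0 ≤ M q q := by
  exact hM.diag_nonneg

private lemma trace_mul_psd_nonneg {ι : Type*} [Fintype ι] [DecidableEq ι]
    {A B : Matrix ι ι ℝ} (hA : A.PosSemidef) (hB : B.PosSemidef) : 0 ≤ (A * B).trace := by
  have h : A * B = hA.sqrt * (hA.sqrt * B) := by rw [← mul_assoc, hA.sqrt_mul_self]
  rw [h, Matrix.trace_mul_comm]
  have hPSD : (hA.sqrt * B * hA.sqrt).PosSemidef := by
    have h2 := hB.mul_mul_conjTranspose_same hA.sqrt
    rwa [hA.posSemidef_sqrt.1] at h2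
  rw [Matrix.trace]
  exact Finset.sum_nonneg fun q _ => psd_diag_nonneg hPSD q

private lemma psd_one_sub_proj {ι : Type*} [Fintype ι] [DecidableEq ι] {P : Matrix ι ι ℝ}
    (hsym : Pᴴ = P) (hidem : P * P = P) : (1 - P).PosSemidef := by
  have h : (1 - P) = (1 - P) * (1 - P)ᴴ := by
    rw [conjTranspose_sub, conjTranspose_one, hsym, sub_mul, one_mul, mul_sub, mul_one, hidem]
    abel
  rw [h]
  exact posSemidef_self_mul_conjTranspose _

section Setting

variable {k : ℕ} (d : Fin k → ℕ) (U : ∀ i, Matrix (Fin (d i)) (Fin (d i)) ℝ)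
  (lam : ∀ i, Fin (d i) → ℝ)

/-- `λ_{i,r}` extended by zero to all naturals `r`. -/
private noncomputable def lamN (i : Fin k) (r : ℕ) : ℝ :=
  if h : r < d i then lam i ⟨r, h⟩ else 0

/-- the entries `U_i[a,r] √λ_{i,r}`, extended by zero. -/
private noncomputable def uu (i : Fin k) (a : Fin (d i)) (r : ℕ) : ℝ :=
  if h : r < d i then U i a ⟨r, h⟩ * Real.sqrt (lam i ⟨r, h⟩) else 0

private noncomputable def muF (r : ℕ) : ℝ := ∑ i : Fin k, lamN d lam i r

private noncomputable def nuF (r : ℕ) : ℝ := ∑ i : Fin k, (lamN d lam i r)^2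

/-- collapse a `Fin`-indexed sum with a coercion condition -/
private lemma coll {D : ℕ} (r : ℕ) (F : Fin D → ℝ) :
    (∑ s : Fin D, if r = (s : ℕ) then F s else 0) = if h : r < D then F ⟨r, h⟩ else 0 := by
  by_cases h : r < D
  · rw [dif_pos h]
    have : ∀ s : Fin D, (if r = (s : ℕ) then F s else 0) = if s = ⟨r, h⟩ then F s else 0 := by
      intro s
      congr 1
      simp [Fin.ext_iff, eq_comm]
    rw [Finset.sum_congr rfl (fun s _ => this s), Finset.sum_ite_eq']
    simp
  · rw [dif_neg h]
    refine Finset.sum_eq_zero fun s _ => ?_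
    rw [if_neg]
    intro hh
    exact h (hh ▸ s.isLt)

private lemma Ucol (hU : ∀ i, U i * (U i)ᵀ = 1) (i : Fin k) (r s : Fin (d i)) :
    (∑ a, U i a r * U i a s) = if r = s then 1 else 0 := by
  have h : (U i)ᵀ * U i = 1 := mul_eq_one_comm.mp (hU i)
  have h2 := congrFun (congrFun h r) s
  simpa [Matrix.mul_apply, Matrix.transpose_apply, Matrix.one_apply] using h2

private lemma uu_gram (hU : ∀ i, U i * (U i)ᵀ = 1) (hpos : ∀ i j, 0 ≤ lam i j)
    (i : Fin k) (r s : ℕ) :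
    (∑ a, uu d U lam i a r * uu d U lam i a s) = if r = s then lamN d lam i r else 0 := by
  by_cases hr : r < d i
  · by_cases hs : s < d i
    · have step : ∀ a, uu d U lam i a r * uu d U lam i a s
          = (U i a ⟨r, hr⟩ * U i a ⟨s, hs⟩) * (Real.sqrt (lam i ⟨r, hr⟩) * Real.sqrt (lam i ⟨s, hs⟩)) := by
        intro a
        rw [uu, uu, dif_pos hr, dif_pos hs]
        ring
      rw [Finset.sum_congr rfl (fun a _ => step a), ← Finset.sum_mul, Ucol d U hU]
      by_cases hrs : r = s
      · subst hrs
        rw [if_pos (show (⟨r,hr⟩ : Fin (d i)) = ⟨r,hs⟩ from rfl), if_pos rfl, one_mul,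
          lamN, dif_pos hr]
        exact Real.mul_self_sqrt (hpos i ⟨r, hr⟩)
      · rw [if_neg (by simp [Fin.ext_iff, hrs]), if_neg hrs, zero_mul]
    · have hz : ∀ a, uu d U lam i a s = 0 := fun a => dif_neg hs
      simp only [hz, mul_zero, Finset.sum_const_zero]
      have hrs : r ≠ s := fun h => hs (h ▸ hr)
      rw [if_neg hrs]
  · have hz : ∀ a, uu d U lam i a r = 0 := fun a => dif_neg hr
    simp only [hz, zero_mul, Finset.sum_const_zero]
    by_cases hrs : r = s
    · rw [if_pos hrs, lamN, dif_neg hr]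
    · rw [if_neg hrs]

private lemma Rmax_eq_sum (p q : (Σ i, Fin (d i))) (n' : ℕ) (hp : d p.1 ≤ n') :
    Rmax d U lam p q = ∑ r ∈ Finset.range n', uu d U lam p.1 p.2 r * uu d U lam q.1 q.2 r := by
  have step1 : ∀ r : Fin (d p.1),
      (∑ s : Fin (d q.1), if (r : ℕ) = (s : ℕ) then
        U p.1 p.2 r * Real.sqrt (lam p.1 r) * Real.sqrt (lam q.1 s) * U q.1 q.2 s else 0)
      = uu d U lam p.1 p.2 (r : ℕ) * uu d U lam q.1 q.2 (r : ℕ) := by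
    intro r
    rw [coll]
    rw [uu, uu, dif_pos r.isLt]
    by_cases h : (r : ℕ) < d q.1
    · rw [dif_pos h, dif_pos h]
      ring
    · rw [dif_neg h, dif_neg h, mul_zero]
  rw [Rmax, Finset.sum_congr rfl (fun r _ => step1 r)]
  rw [Fin.sum_univ_eq_sum_range (fun r => uu d U lam p.1 p.2 r * uu d U lam q.1 q.2 r) (d p.1)]
  refine Finset.sum_subset (Finset.range_subset_range.mpr hp) fun r _ hr => ?_
  rw [uu, dif_neg (by simpa using hr), zero_mul]

end Setting

private def nn {k : ℕ} (d : Fin k → ℕ) : ℕ := Fintype.card (Σ i, Fin (d i))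

private lemma d_le_nn {k : ℕ} (d : Fin k → ℕ) (i : Fin k) : d i ≤ nn d := by
  have h : nn d = ∑ j : Fin k, d j := by
    rw [nn, Fintype.card_sigma]
    simp
  rw [h]
  exact Finset.single_le_sum (f := fun j => d j) (fun j _ => Nat.zero_le _) (Finset.mem_univ i)

private lemma sigma_block_sum {k : ℕ} {d : Fin k → ℕ} (j : Fin k)
    (g : (Σ i, Fin (d i)) → ℝ) (h : ∀ p : (Σ i, Fin (d i)), p.1 ≠ j → g p = 0) :
    (∑ p : (Σ i, Fin (d i)), g p) = ∑ b : Fin (d j), g ⟨j, b⟩ := by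
  rw [sigma_sum]
  exact Finset.sum_eq_single j
    (fun i _ hij => Finset.sum_eq_zero fun a _ => h ⟨i, a⟩ hij)
    (fun hj => absurd (Finset.mem_univ j) hj)

section Setting2

variable {k : ℕ} (d : Fin k → ℕ) (U : ∀ i, Matrix (Fin (d i)) (Fin (d i)) ℝ)
  (lam : ∀ i, Fin (d i) → ℝ)

private noncomputable def Cmat : Matrix (Σ i, Fin (d i)) (Σ i, Fin (d i)) ℝ :=
  fun p q => if p.1 = q.1 then uu d U lam p.1 p.2 (q.2 : ℕ) else 0

private noncomputable def XX : Matrix (Σ i, Fin (d i)) (Fin (nn d)) ℝ :=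
  fun p r => uu d U lam p.1 p.2 (r : ℕ)

private lemma CCT (hU : ∀ i, U i * (U i)ᵀ = 1) :
    Cmat d U lam * (Cmat d U lam)ᵀ = Rzero d U lam := by
  ext p q
  rw [Matrix.mul_apply]
  by_cases hpq : p.1 = q.1
  · rw [show Rzero d U lam p q = Rmax d U lam p q from if_pos hpq]
    rw [sigma_block_sum p.1 _ (fun x hx => by
      show (if p.1 = x.1 then _ else 0) * (if q.1 = x.1 then _ else 0) = 0
      rw [if_neg (fun hh : p.1 = x.1 => hx hh.symm), zero_mul])]
    have hterm : ∀ b : Fin (d p.1),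
        Cmat d U lam p ⟨p.1, b⟩ * (Cmat d U lam)ᵀ ⟨p.1, b⟩ q
          = uu d U lam p.1 p.2 (b : ℕ) * uu d U lam q.1 q.2 (b : ℕ) := by
      intro b
      show (if p.1 = p.1 then _ else 0) * (if q.1 = p.1 then _ else 0) = _
      rw [if_pos rfl, if_pos hpq.symm]
    rw [Finset.sum_congr rfl (fun b _ => hterm b)]
    rw [Rmax_eq_sum d U lam p q (d p.1) le_rfl]
    exact Fin.sum_univ_eq_sum_range
      (fun r => uu d U lam p.1 p.2 r * uu d U lam q.1 q.2 r) (d p.1)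
  · rw [show Rzero d U lam p q = 0 from if_neg hpq]
    refine Finset.sum_eq_zero fun x _ => ?_
    show (if p.1 = x.1 then _ else 0) * (if q.1 = x.1 then _ else 0) = 0
    by_cases h1 : p.1 = x.1
    · rw [if_neg (fun h2 : q.1 = x.1 => hpq (h1.trans h2.symm)), mul_zero]
    · rw [if_neg h1, zero_mul]

private lemma XXT (hU : ∀ i, U i * (U i)ᵀ = 1) :
    XX d U lam * (XX d U lam)ᵀ = Rmax d U lam := by
  ext p q
  rw [Matrix.mul_apply, Rmax_eq_sum d U lam p q (nn d) (d_le_nn d p.1)]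
  rw [← Fin.sum_univ_eq_sum_range (fun r => uu d U lam p.1 p.2 r * uu d U lam q.1 q.2 r) (nn d)]
  rfl

private lemma XTX (hU : ∀ i, U i * (U i)ᵀ = 1) (hpos : ∀ i j, 0 ≤ lam i j) :
    (XX d U lam)ᵀ * XX d U lam = Matrix.diagonal (fun r : Fin (nn d) => muF d lam (r : ℕ)) := by
  ext r s
  rw [Matrix.mul_apply]
  have h1 : ∀ p : (Σ i, Fin (d i)), (XX d U lam)ᵀ r p * XX d U lam p s
      = uu d U lam p.1 p.2 (r : ℕ) * uu d U lam p.1 p.2 (s : ℕ) := fun p => rfl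
  rw [Finset.sum_congr rfl (fun p _ => h1 p), sigma_sum]
  rw [Finset.sum_congr rfl (fun i _ => uu_gram d U lam hU hpos i (r : ℕ) (s : ℕ))]
  by_cases hrs : (r : ℕ) = (s : ℕ)
  · have : r = s := Fin.ext hrs
    subst this
    simp [muF]
  · rw [Matrix.diagonal_apply_ne _ (fun h => hrs (congrArg _ h))]
    exact Finset.sum_eq_zero fun i _ => if_neg hrs

private lemma YXC (hU : ∀ i, U i * (U i)ᵀ = 1) (hpos : ∀ i j, 0 ≤ lam i j)
    (r : Fin (nn d)) (q : (Σ i, Fin (d i))) :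
    ((XX d U lam)ᵀ * Cmat d U lam) r q
      = if (r : ℕ) = (q.2 : ℕ) then lamN d lam q.1 (r : ℕ) else 0 := by
  rw [Matrix.mul_apply]
  rw [sigma_block_sum q.1 _ (fun x hx => by
    rw [Cmat, if_neg hx, mul_zero])]
  have hterm : ∀ a : Fin (d q.1),
      (XX d U lam)ᵀ r ⟨q.1, a⟩ * Cmat d U lam ⟨q.1, a⟩ q
        = uu d U lam q.1 a (r : ℕ) * uu d U lam q.1 a (q.2 : ℕ) := by
    intro a
    rw [Cmat, if_pos rfl]
    rfl
  rw [Finset.sum_congr rfl (fun a _ => hterm a)]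
  exact uu_gram d U lam hU hpos q.1 (r : ℕ) (q.2 : ℕ)

private lemma XT_R0_X (hU : ∀ i, U i * (U i)ᵀ = 1) (hpos : ∀ i j, 0 ≤ lam i j) :
    (XX d U lam)ᵀ * Rzero d U lam * XX d U lam
      = Matrix.diagonal (fun r : Fin (nn d) => nuF d lam (r : ℕ)) := by
  have h : (XX d U lam)ᵀ * Rzero d U lam * XX d U lam
      = ((XX d U lam)ᵀ * Cmat d U lam) * ((XX d U lam)ᵀ * Cmat d U lam)ᵀ := by
    rw [Matrix.transpose_mul, Matrix.transpose_transpose, ← CCT d U lam hU]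
    simp only [Matrix.mul_assoc]
  rw [h]
  ext r s
  rw [Matrix.mul_apply]
  have hterm : ∀ q : (Σ i, Fin (d i)),
      ((XX d U lam)ᵀ * Cmat d U lam) r q * (((XX d U lam)ᵀ * Cmat d U lam))ᵀ q s
      = (if (r : ℕ) = (q.2 : ℕ) then lamN d lam q.1 (r : ℕ) else 0)
        * (if (s : ℕ) = (q.2 : ℕ) then lamN d lam q.1 (s : ℕ) else 0) := by
    intro q
    rw [Matrix.transpose_apply, YXC d U lam hU hpos, YXC d U lam hU hpos]
  rw [Finset.sum_congr rfl (fun q _ => hterm q), sigma_sum]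
  by_cases hrs : (r : ℕ) = (s : ℕ)
  · have heq : r = s := Fin.ext hrs
    subst heq
    rw [Matrix.diagonal_apply_eq]
    rw [nuF]
    refine Finset.sum_congr rfl fun j _ => ?_
    have hstep : ∀ b : Fin (d j),
        (if (r : ℕ) = (b : ℕ) then lamN d lam j (r : ℕ) else 0)
          * (if (r : ℕ) = (b : ℕ) then lamN d lam j (r : ℕ) else 0)
        = if (r : ℕ) = (b : ℕ) then lamN d lam j (r : ℕ) * lamN d lam j (r : ℕ) else 0 := by
      intro b
      split <;> simp
    rw [Finset.sum_congr rfl (fun b _ => hstep b),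
      coll (r : ℕ) (fun _ : Fin (d j) => lamN d lam j (r : ℕ) * lamN d lam j (r : ℕ))]
    by_cases h : (r : ℕ) < d j
    · rw [dif_pos h, sq]
    · rw [dif_neg h, lamN, dif_neg h]
      simp
  · rw [Matrix.diagonal_apply_ne _ (fun h => hrs (congrArg _ h))]
    refine Finset.sum_eq_zero fun j _ => Finset.sum_eq_zero fun b _ => ?_
    by_cases h1 : (r : ℕ) = (b : ℕ)
    · rw [if_neg (fun h2 : (s : ℕ) = (b : ℕ) => hrs (h1.trans h2.symm)), mul_zero]
    · rw [if_neg h1, zero_mul]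

end Setting2

private lemma msqrt_eq {ι : Type*} [Fintype ι] [DecidableEq ι] {M : Matrix ι ι ℝ}
    (h : M.PosSemidef) : msqrt M = h.sqrt := by
  unfold msqrt
  exact dif_pos h

section Setting3

variable {k : ℕ} (d : Fin k → ℕ) (U : ∀ i, Matrix (Fin (d i)) (Fin (d i)) ℝ)
  (lam : ∀ i, Fin (d i) → ℝ)

private lemma lamN_nonneg (hpos : ∀ i j, 0 ≤ lam i j) (i : Fin k) (r : ℕ) :
    0 ≤ lamN d lam i r := by
  rw [lamN]
  split
  · exact hpos i _
  · exact le_refl 0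

private lemma muF_nonneg (hpos : ∀ i j, 0 ≤ lam i j) (r : ℕ) : 0 ≤ muF d lam r :=
  Finset.sum_nonneg fun i _ => lamN_nonneg d lam hpos i r

private lemma nuF_nonneg (r : ℕ) : 0 ≤ nuF d lam r :=
  Finset.sum_nonneg fun i _ => sq_nonneg _

private lemma lamN_eq_zero (hpos : ∀ i j, 0 ≤ lam i j) {r : ℕ} (h : muF d lam r = 0)
    (i : Fin k) : lamN d lam i r = 0 := by
  have := (Finset.sum_eq_zero_iff_of_nonneg
    (fun j _ => lamN_nonneg d lam hpos j r)).mp h i (Finset.mem_univ i)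
  exact this

private lemma nuF_eq_zero (hpos : ∀ i j, 0 ≤ lam i j) {r : ℕ} (h : muF d lam r = 0) :
    nuF d lam r = 0 := by
  rw [nuF]
  refine Finset.sum_eq_zero fun i _ => ?_
  rw [lamN_eq_zero d lam hpos h i]
  simp

private lemma Xcol0 (hpos : ∀ i j, 0 ≤ lam i j) (p : Σ i, Fin (d i)) (r : ℕ)
    (h : muF d lam r = 0) : uu d U lam p.1 p.2 r = 0 := by
  have h2 := lamN_eq_zero d lam hpos h p.1
  rw [lamN] at h2
  rw [uu]
  split
  · next hh => rw [dif_pos hh] at h2; rw [h2, Real.sqrt_zero, mul_zero]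
  · rfl

private lemma XdiagJ (hpos : ∀ i j, 0 ≤ lam i j) :
    XX d U lam * Matrix.diagonal (fun r : Fin (nn d) =>
      if muF d lam (r : ℕ) = 0 then (0:ℝ) else 1) = XX d U lam := by
  ext p r
  rw [Matrix.mul_diagonal]
  by_cases h : muF d lam (r : ℕ) = 0
  · rw [if_pos h, mul_zero]
    exact (Xcol0 d U lam hpos p r h).symm
  · rw [if_neg h, mul_one]

private lemma sandwichMu (hU : ∀ i, U i * (U i)ᵀ = 1) (hpos : ∀ i j, 0 ≤ lam i j)
    (D1 D2 : Fin (nn d) → ℝ) :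
    (XX d U lam * Matrix.diagonal D1 * (XX d U lam)ᵀ)
      * (XX d U lam * Matrix.diagonal D2 * (XX d U lam)ᵀ)
    = XX d U lam * Matrix.diagonal (fun r => D1 r * muF d lam (r:ℕ) * D2 r)
      * (XX d U lam)ᵀ := by
  have h1 : Matrix.diagonal D1 * (((XX d U lam)ᵀ * XX d U lam) * Matrix.diagonal D2)
      = Matrix.diagonal (fun r => D1 r * muF d lam (r:ℕ) * D2 r) := by
    rw [XTX d U lam hU hpos, Matrix.diagonal_mul_diagonal, Matrix.diagonal_mul_diagonal]
    congr 1
    funext r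
    ring
  have h2 : (XX d U lam * Matrix.diagonal D1 * (XX d U lam)ᵀ)
      * (XX d U lam * Matrix.diagonal D2 * (XX d U lam)ᵀ)
    = XX d U lam * (Matrix.diagonal D1 * (((XX d U lam)ᵀ * XX d U lam) * Matrix.diagonal D2))
      * (XX d U lam)ᵀ := by
    simp only [Matrix.mul_assoc]
  rw [h2, h1]

private lemma sandwichNu (hU : ∀ i, U i * (U i)ᵀ = 1) (hpos : ∀ i j, 0 ≤ lam i j)
    (D1 D2 : Fin (nn d) → ℝ) :
    (XX d U lam * Matrix.diagonal D1 * (XX d U lam)ᵀ) * Rzero d U lam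
      * (XX d U lam * Matrix.diagonal D2 * (XX d U lam)ᵀ)
    = XX d U lam * Matrix.diagonal (fun r => D1 r * nuF d lam (r:ℕ) * D2 r)
      * (XX d U lam)ᵀ := by
  have h1 : Matrix.diagonal D1 * (((XX d U lam)ᵀ * Rzero d U lam * XX d U lam) * Matrix.diagonal D2)
      = Matrix.diagonal (fun r => D1 r * nuF d lam (r:ℕ) * D2 r) := by
    rw [XT_R0_X d U lam hU hpos, Matrix.diagonal_mul_diagonal, Matrix.diagonal_mul_diagonal]
    congr 1
    funext r
    ring
  have h2 : (XX d U lam * Matrix.diagonal D1 * (XX d U lam)ᵀ) * Rzero d U lam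
      * (XX d U lam * Matrix.diagonal D2 * (XX d U lam)ᵀ)
    = XX d U lam * (Matrix.diagonal D1 * (((XX d U lam)ᵀ * Rzero d U lam * XX d U lam)
        * Matrix.diagonal D2)) * (XX d U lam)ᵀ := by
    simp only [Matrix.mul_assoc]
  rw [h2, h1]

private lemma Rmax_psd (hU : ∀ i, U i * (U i)ᵀ = 1) : (Rmax d U lam).PosSemidef := by
  rw [← XXT d U lam hU, ← conjT_eq_T]
  exact posSemidef_self_mul_conjTranspose _

private lemma Rzero_psd (hU : ∀ i, U i * (U i)ᵀ = 1) : (Rzero d U lam).PosSemidef := by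
  rw [← CCT d U lam hU, ← conjT_eq_T]
  exact posSemidef_self_mul_conjTranspose _

private lemma sandwich_psd (hpos2 : ∀ r : Fin (nn d), 0 ≤ (fun _ => (0:ℝ)) r) : True := trivial

private lemma trace_msqrt_Rm (hU : ∀ i, U i * (U i)ᵀ = 1) (hpos : ∀ i j, 0 ≤ lam i j) :
    (msqrt (msqrt (Rmax d U lam) * Rzero d U lam * msqrt (Rmax d U lam))).trace
      = ∑ r ∈ Finset.range (nn d), Real.sqrt (nuF d lam r) := by
  have hRm := Rmax_psd d U lam hU
  have hR0 := Rzero_psd d U lam hU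
  set εf : Fin (nn d) → ℝ :=
    fun r => if muF d lam (r:ℕ) = 0 then 0 else 1/Real.sqrt (muF d lam (r:ℕ)) with hεf
  set B := XX d U lam * Matrix.diagonal εf * (XX d U lam)ᵀ with hBdef
  have hεf0 : ∀ r, 0 ≤ εf r := by
    intro r
    simp only [hεf]
    split
    · exact le_refl 0
    · positivity
  have hBpsd : B.PosSemidef := by
    have hd : (Matrix.diagonal εf).PosSemidef := Matrix.PosSemidef.diagonal hεf0
    have h2 := hd.mul_mul_conjTranspose_same (XX d U lam)
    rwa [conjT_eq_T] at h2
  have hB2 : B * B = Rmax d U lam := by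
    rw [hBdef, sandwichMu d U lam hU hpos]
    have hfun : (fun r : Fin (nn d) => εf r * muF d lam (r:ℕ) * εf r)
        = fun r : Fin (nn d) => if muF d lam (r:ℕ) = 0 then (0:ℝ) else 1 := by
      funext r
      simp only [hεf]
      by_cases h : muF d lam (r:ℕ) = 0
      · simp [h]
      · simp only [if_neg h]
        have hlt : 0 < muF d lam (r:ℕ) := lt_of_le_of_ne (muF_nonneg d lam hpos _) (Ne.symm h)
        have e1 : Real.sqrt (muF d lam (r:ℕ)) * Real.sqrt (muF d lam (r:ℕ)) = muF d lam (r:ℕ) :=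
          Real.mul_self_sqrt hlt.le
        have hs : Real.sqrt (muF d lam (r:ℕ)) ≠ 0 := by positivity
        field_simp
        rw [Real.sq_sqrt hlt.le]
    rw [hfun, XdiagJ d U lam hpos, XXT d U lam hU]
  have hBsqrt : msqrt (Rmax d U lam) = B := by
    rw [msqrt_eq hRm]
    exact (hBpsd.eq_sqrt_of_sq_eq hRm (by rw [pow_two]; exact hB2)).symm
  set hf : Fin (nn d) → ℝ := fun r => if muF d lam (r:ℕ) = 0 then 0
      else Real.sqrt (nuF d lam (r:ℕ))/(muF d lam (r:ℕ)) with hhf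
  have hhf0 : ∀ r, 0 ≤ hf r := by
    intro r
    simp only [hhf]
    split
    · exact le_refl 0
    · have := nuF_nonneg d lam (r:ℕ)
      have := muF_nonneg d lam hpos (r:ℕ)
      positivity
  set T := XX d U lam * Matrix.diagonal hf * (XX d U lam)ᵀ with hTdef
  have hTpsd : T.PosSemidef := by
    have hd : (Matrix.diagonal hf).PosSemidef := Matrix.PosSemidef.diagonal hhf0
    have h2 := hd.mul_mul_conjTranspose_same (XX d U lam)
    rwa [conjT_eq_T] at h2
  have hMR : B * Rzero d U lam * B
      = XX d U lam * Matrix.diagonal (fun r => εf r * nuF d lam (r:ℕ) * εf r)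
        * (XX d U lam)ᵀ := by
    rw [hBdef]
    exact sandwichNu d U lam hU hpos εf εf
  have hT2 : T * T = B * Rzero d U lam * B := by
    rw [hMR, hTdef, sandwichMu d U lam hU hpos]
    have hfun2 : (fun r : Fin (nn d) => hf r * muF d lam (r:ℕ) * hf r)
        = fun r : Fin (nn d) => εf r * nuF d lam (r:ℕ) * εf r := by
      funext r
      simp only [hεf, hhf]
      by_cases h : muF d lam (r:ℕ) = 0
      · simp [h]
      · simp only [if_neg h]
        have hlt : 0 < muF d lam (r:ℕ) := lt_of_le_of_ne (muF_nonneg d lam hpos _) (Ne.symm h)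
        have e1 : Real.sqrt (muF d lam (r:ℕ)) * Real.sqrt (muF d lam (r:ℕ)) = muF d lam (r:ℕ) :=
          Real.mul_self_sqrt hlt.le
        have e2 : Real.sqrt (nuF d lam (r:ℕ)) * Real.sqrt (nuF d lam (r:ℕ)) = nuF d lam (r:ℕ) :=
          Real.mul_self_sqrt (nuF_nonneg d lam _)
        have hs : Real.sqrt (muF d lam (r:ℕ)) ≠ 0 := by positivity
        field_simp
        nlinarith [e1, e2]
    rw [hfun2]
  have hBsym : Bᴴ = B := hBpsd.1
  have hMRpsd : (B * Rzero d U lam * B).PosSemidef := by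
    have h2 := hR0.mul_mul_conjTranspose_same B
    rwa [hBsym] at h2
  have hTsqrt : msqrt (B * Rzero d U lam * B) = T := by
    rw [msqrt_eq hMRpsd]
    exact (hTpsd.eq_sqrt_of_sq_eq hMRpsd (by rw [pow_two]; exact hT2)).symm
  rw [hBsqrt, hTsqrt, hTdef]
  rw [Matrix.trace_mul_cycle, XTX d U lam hU hpos, Matrix.diagonal_mul_diagonal,
    Matrix.trace_diagonal]
  rw [← Fin.sum_univ_eq_sum_range (fun r => Real.sqrt (nuF d lam r)) (nn d)]
  refine Finset.sum_congr rfl fun r _ => ?_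
  simp only [hhf]
  by_cases h : muF d lam (r:ℕ) = 0
  · rw [if_pos h, mul_zero, nuF_eq_zero d lam hpos h, Real.sqrt_zero]
  · rw [if_neg h]
    field_simp

end Setting3

section Setting4

variable {k : ℕ} (d : Fin k → ℕ) (U : ∀ i, Matrix (Fin (d i)) (Fin (d i)) ℝ)
  (lam : ∀ i, Fin (d i) → ℝ)

private lemma nuF_vanish (r : ℕ) (h : nn d ≤ r) : nuF d lam r = 0 := by
  rw [nuF]
  refine Finset.sum_eq_zero fun i _ => ?_
  have : ¬(r < d i) := fun hc => absurd (lt_of_lt_of_le hc (d_le_nn d i)) (not_lt.mpr h)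
  rw [lamN, dif_neg this]
  simp

private lemma lamN_antitone (hpos : ∀ i j, 0 ≤ lam i j)
    (hdec : ∀ i, ∀ r s : Fin (d i), r ≤ s → lam i s ≤ lam i r)
    (i : Fin k) (r s : ℕ) (hrs : r ≤ s) : lamN d lam i s ≤ lamN d lam i r := by
  rw [lamN, lamN]
  by_cases hs : s < d i
  · have hr : r < d i := lt_of_le_of_lt hrs hs
    rw [dif_pos hs, dif_pos hr]
    exact hdec i ⟨r, hr⟩ ⟨s, hs⟩ hrs
  · rw [dif_neg hs]
    split
    · exact hpos i _
    · exact le_refl 0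

private lemma sum_lam_sq :
    (∑ i : Fin k, ∑ b : Fin (d i), (lamN d lam i (b:ℕ))^2)
      = ∑ r ∈ Finset.range (nn d), nuF d lam r := by
  have h1 : (∑ r ∈ Finset.range (nn d), nuF d lam r)
      = ∑ i : Fin k, ∑ r ∈ Finset.range (nn d), (lamN d lam i r)^2 := by
    rw [Finset.sum_comm]
    rfl
  rw [h1]
  refine Finset.sum_congr rfl fun i _ => ?_
  rw [Fin.sum_univ_eq_sum_range (fun r => (lamN d lam i r)^2) (d i)]
  refine Finset.sum_subset (Finset.range_subset_range.mpr (d_le_nn d i)) fun r _ hr => ?_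
  rw [lamN, dif_neg (by simpa using hr)]
  simp

private lemma CAC (hU : ∀ i, U i * (U i)ᵀ = 1) (hpos : ∀ i j, 0 ≤ lam i j)
    (A : Matrix (Σ i, Fin (d i)) (Σ i, Fin (d i)) ℝ)
    (hblocks : ∀ i (a b : Fin (d i)), A ⟨i, a⟩ ⟨i, b⟩ = Rmax d U lam ⟨i, a⟩ ⟨i, b⟩)
    (i : Fin k) (r s : Fin (d i)) :
    ((Cmat d U lam)ᵀ * A * Cmat d U lam) ⟨i, r⟩ ⟨i, s⟩
      = if (r:ℕ) = (s:ℕ) then (lamN d lam i (r:ℕ))^2 else 0 := by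
  rw [Matrix.mul_apply]
  rw [sigma_block_sum i _ (fun x hx => by
    show ((Cmat d U lam)ᵀ * A) ⟨i,r⟩ x * Cmat d U lam x ⟨i,s⟩ = 0
    rw [show Cmat d U lam x ⟨i,s⟩ = 0 from if_neg hx, mul_zero])]
  have hstep1 : ∀ b : Fin (d i), ((Cmat d U lam)ᵀ * A) ⟨i,r⟩ ⟨i,b⟩
      = ∑ t ∈ Finset.range (nn d),
          (if (r:ℕ) = t then lamN d lam i (r:ℕ) else 0) * uu d U lam i b t := by
    intro b
    rw [Matrix.mul_apply]
    rw [sigma_block_sum i _ (fun x hx => by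
      show (Cmat d U lam)ᵀ ⟨i,r⟩ x * A x ⟨i,b⟩ = 0
      rw [Matrix.transpose_apply, show Cmat d U lam x ⟨i,r⟩ = 0 from if_neg hx, zero_mul])]
    have h2 : ∀ a : Fin (d i), (Cmat d U lam)ᵀ ⟨i,r⟩ ⟨i,a⟩ * A ⟨i,a⟩ ⟨i,b⟩
        = ∑ t ∈ Finset.range (nn d),
            (uu d U lam i a (r:ℕ) * uu d U lam i a t) * uu d U lam i b t := by
      intro a
      rw [Matrix.transpose_apply,
        show Cmat d U lam ⟨i,a⟩ ⟨i,r⟩ = uu d U lam i a (r:ℕ) from if_pos rfl]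
      rw [hblocks i a b, Rmax_eq_sum d U lam ⟨i,a⟩ ⟨i,b⟩ (nn d) (d_le_nn d i), Finset.mul_sum]
      exact Finset.sum_congr rfl fun t _ => by ring
    rw [Finset.sum_congr rfl (fun a _ => h2 a), Finset.sum_comm]
    refine Finset.sum_congr rfl fun t _ => ?_
    rw [← Finset.sum_mul, uu_gram d U lam hU hpos]
  have hstep2 : ∀ b : Fin (d i),
      ((Cmat d U lam)ᵀ * A) ⟨i,r⟩ ⟨i,b⟩ * Cmat d U lam ⟨i,b⟩ ⟨i,s⟩
      = ∑ t ∈ Finset.range (nn d),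
          (if (r:ℕ) = t then lamN d lam i (r:ℕ) else 0)
            * (uu d U lam i b t * uu d U lam i b (s:ℕ)) := by
    intro b
    rw [hstep1 b, show Cmat d U lam ⟨i,b⟩ ⟨i,s⟩ = uu d U lam i b (s:ℕ) from if_pos rfl,
      Finset.sum_mul]
    exact Finset.sum_congr rfl fun t _ => by ring
  rw [Finset.sum_congr rfl (fun b _ => hstep2 b), Finset.sum_comm]
  have hstep3 : ∀ t, (∑ b : Fin (d i),
      (if (r:ℕ) = t then lamN d lam i (r:ℕ) else 0)
        * (uu d U lam i b t * uu d U lam i b (s:ℕ)))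
      = if t = (r:ℕ) then
          (if (r:ℕ) = (s:ℕ) then lamN d lam i (r:ℕ) * lamN d lam i (r:ℕ) else 0) else 0 := by
    intro t
    rw [← Finset.mul_sum, uu_gram d U lam hU hpos]
    by_cases h1 : (r:ℕ) = t
    · subst h1
      rw [if_pos rfl, if_pos rfl]
      by_cases h2 : (r:ℕ) = (s:ℕ)
      · rw [if_pos h2, if_pos h2]
      · rw [if_neg h2, if_neg h2, mul_zero]
    · rw [if_neg h1, zero_mul, if_neg (fun h => h1 h.symm)]
  rw [Finset.sum_congr rfl (fun t _ => hstep3 t), Finset.sum_ite_eq']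
  rw [if_pos (Finset.mem_range.mpr (lt_of_lt_of_le r.isLt (d_le_nn d i)))]
  by_cases h2 : (r:ℕ) = (s:ℕ)
  · rw [if_pos h2, if_pos h2, sq]
  · rw [if_neg h2, if_neg h2]

end Setting4

section Setting5

variable {k : ℕ} (d : Fin k → ℕ) (U : ∀ i, Matrix (Fin (d i)) (Fin (d i)) ℝ)
  (lam : ∀ i, Fin (d i) → ℝ)

private lemma sym_sandwich {ι : Type*} [Fintype ι] [DecidableEq ι]
    (M : Matrix ι ι ℝ) (v : ι → ℝ) :
    (M * Matrix.diagonal v * Mᵀ)ᴴ = M * Matrix.diagonal v * Mᵀ := by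
  rw [conjT_eq_T, Matrix.transpose_mul, Matrix.transpose_mul, Matrix.transpose_transpose,
    Matrix.diagonal_transpose, Matrix.mul_assoc]

private lemma sigma_eq (q q' : Σ j, Fin (d j)) (h1 : q.1 = q'.1)
    (h2 : (q.2 : ℕ) = (q'.2 : ℕ)) : q = q' := by
  obtain ⟨j, b⟩ := q
  obtain ⟨j', b'⟩ := q'
  dsimp at h1 h2
  subst h1
  rw [Fin.ext h2]

private lemma maj_bound (hU : ∀ i, U i * (U i)ᵀ = 1) (hpos : ∀ i j, 0 ≤ lam i j)
    (hdec : ∀ i, ∀ r s : Fin (d i), r ≤ s → lam i s ≤ lam i r)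
    (A : Matrix (Σ i, Fin (d i)) (Σ i, Fin (d i)) ℝ) (hA : A.PosSemidef)
    (hblocks : ∀ i (a b : Fin (d i)), A ⟨i, a⟩ ⟨i, b⟩ = Rmax d U lam ⟨i, a⟩ ⟨i, b⟩)
    (P : Matrix (Σ i, Fin (d i)) (Σ i, Fin (d i)) ℝ)
    (hPsym : Pᴴ = P) (hPP : P * P = P) (hPpsd : P.PosSemidef) (m : ℕ)
    (htrP : P.trace = (m : ℝ)) :
    (hA.sqrt * Rzero d U lam * hA.sqrt * P).trace
      ≤ ∑ r ∈ Finset.range m, nuF d lam r := by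
  classical
  set S := hA.sqrt with hSdef
  have hSsym : Sᵀ = S := by rw [← conjT_eq_T]; exact hA.posSemidef_sqrt.1
  set C := Cmat d U lam with hCdef
  set W := S * C with hWdef
  have hWWT : W * Wᵀ = S * Rzero d U lam * S := by
    rw [hWdef, Matrix.transpose_mul, hSsym, ← CCT d U lam hU]
    simp only [Matrix.mul_assoc, hCdef]
  have hWTW : Wᵀ * W = Cᵀ * A * C := by
    rw [hWdef, Matrix.transpose_mul, hSsym]
    have h1 : Cᵀ * S * (S * C) = Cᵀ * (S * S) * C := by simp only [Matrix.mul_assoc]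
    rw [h1, hSdef, hA.sqrt_mul_self]
  set Q := Wᵀ * P * W with hQdef
  have hQpsd : Q.PosSemidef := by
    have h := hPpsd.conjTranspose_mul_mul_same W
    rwa [conjT_eq_T] at h
  have hQd0 : ∀ q, 0 ≤ Q q q := fun q => psd_diag_nonneg hQpsd q
  have hCACd : ∀ q : (Σ i, Fin (d i)), (Cᵀ * A * C) q q = (lamN d lam q.1 (q.2:ℕ))^2 := by
    intro q
    have h := CAC d U lam hU hpos A hblocks q.1 q.2 q.2
    rw [if_pos rfl] at h
    exact h
  have hCAC2 : ∀ q q' : (Σ i, Fin (d i)), q.1 = q'.1 → (Cᵀ * A * C) q q'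
      = if (q.2:ℕ) = (q'.2:ℕ) then (lamN d lam q.1 (q.2:ℕ))^2 else 0 := by
    intro q q' h
    obtain ⟨j, b⟩ := q
    obtain ⟨j', b'⟩ := q'
    dsimp at h
    subst h
    exact CAC d U lam hU hpos A hblocks j b b'
  have hQWle : ∀ q : (Σ i, Fin (d i)), Q q q ≤ (lamN d lam q.1 (q.2:ℕ))^2 := by
    intro q
    have h1 : (Wᵀ * (1 - P) * W).PosSemidef := by
      have h := (psd_one_sub_proj hPsym hPP).conjTranspose_mul_mul_same W
      rwa [conjT_eq_T] at h
    have h2 := psd_diag_nonneg h1 q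
    have h3 : Wᵀ * (1 - P) * W = Wᵀ * W - Q := by
      rw [Matrix.mul_sub, Matrix.mul_one, Matrix.sub_mul, hQdef]
    rw [h3, Matrix.sub_apply, hWTW, hCACd q] at h2
    linarith
  set sc : (Σ i, Fin (d i)) → ℝ :=
    fun q => if lam q.1 q.2 = 0 then 0 else (lam q.1 q.2)⁻¹ with hscdef
  set Wh := W * Matrix.diagonal sc with hWhdef
  have hWhT : Whᵀ = Matrix.diagonal sc * Wᵀ := by
    rw [hWhdef, Matrix.transpose_mul, Matrix.diagonal_transpose]
  have hWhTWh : Whᵀ * Wh = Matrix.diagonal sc * ((Cᵀ * A * C) * Matrix.diagonal sc) := by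
    rw [hWhT, hWhdef, ← hWTW]
    simp only [Matrix.mul_assoc]
  -- per-block bound
  have hblockbound : ∀ i : Fin k,
      (∑ b : Fin (d i), Q ⟨i,b⟩ ⟨i,b⟩) ≤ ∑ r ∈ Finset.range m, (lamN d lam i r)^2 := by
    intro i
    set Di : (Σ j, Fin (d j)) → ℝ := fun q => if q.1 = i then 1 else 0 with hDidef
    set Ji : (Σ j, Fin (d j)) → ℝ :=
      fun q => if q.1 = i ∧ lam q.1 q.2 ≠ 0 then 1 else 0 with hJidef
    set Pri := Wh * Matrix.diagonal Di * Whᵀ with hPridef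
    have hPrisym : Priᴴ = Pri := by
      rw [hPridef]
      exact sym_sandwich Wh Di
    have hDkey : Matrix.diagonal Di * ((Matrix.diagonal sc * ((Cᵀ * A * C) * Matrix.diagonal sc))
          * Matrix.diagonal Di) = Matrix.diagonal Ji := by
      ext q q'
      rw [Matrix.diagonal_mul, Matrix.mul_diagonal, Matrix.diagonal_mul, Matrix.mul_diagonal]
      by_cases hq : q.1 = i
      · by_cases hq' : q'.1 = i
        · by_cases hbb : (q.2:ℕ) = (q'.2:ℕ)
          · have hqq : q = q' := sigma_eq d q q' (hq.trans hq'.symm) hbb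
            subst hqq
            rw [Matrix.diagonal_apply_eq]
            rw [hCAC2 q q rfl, if_pos rfl]
            rw [show Di q = 1 from if_pos hq]
            have hlamN : lamN d lam q.1 (q.2:ℕ) = lam q.1 q.2 := by
              rw [lamN, dif_pos q.2.isLt]
            rw [hlamN]
            by_cases hl : lam q.1 q.2 = 0
            · rw [show Ji q = 0 from if_neg (fun hc => hc.2 hl), hl]
              ring
            · rw [show Ji q = 1 from if_pos ⟨hq, hl⟩,
                show sc q = (lam q.1 q.2)⁻¹ from if_neg hl]
              have hlpos : 0 < lam q.1 q.2 := lt_of_le_of_ne (hpos _ _) (Ne.symm hl)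
              field_simp
          · have hne : q ≠ q' := fun hc => hbb (by rw [hc])
            rw [Matrix.diagonal_apply_ne _ hne, hCAC2 q q' (hq.trans hq'.symm), if_neg hbb]
            ring
        · have hne : q ≠ q' := fun hc => hq' (hc ▸ hq)
          rw [Matrix.diagonal_apply_ne _ hne, show Di q' = 0 from if_neg hq']
          ring
      · rw [show Di q = 0 from if_neg hq]
        by_cases hqq : q = q'
        · subst hqq
          rw [Matrix.diagonal_apply_eq, show Ji q = 0 from if_neg (fun hc => hq hc.1)]
          ring
        · rw [Matrix.diagonal_apply_ne _ hqq]
          ring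
    have hWhJi : Wh * Matrix.diagonal Ji = Wh * Matrix.diagonal Di := by
      ext p q
      rw [Matrix.mul_diagonal, Matrix.mul_diagonal]
      by_cases hq : q.1 = i
      · by_cases hl : lam q.1 q.2 = 0
        · have hWh0 : Wh p q = 0 := by
            rw [hWhdef, Matrix.mul_diagonal, hscdef]
            simp [hl]
          rw [hWh0, zero_mul, zero_mul]
        · rw [hJidef, hDidef]
          simp [hq, hl]
      · rw [hJidef, hDidef]
        simp [hq]
    have hPri2 : Pri * Pri = Pri := by
      calc Pri * Pri
          = Wh * ((Matrix.diagonal Di * ((Whᵀ * Wh) * Matrix.diagonal Di)) * Whᵀ) := by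
            rw [hPridef]; simp only [Matrix.mul_assoc]
        _ = Wh * ((Matrix.diagonal Di * ((Matrix.diagonal sc * ((Cᵀ * A * C) * Matrix.diagonal sc)) * Matrix.diagonal Di)) * Whᵀ) := by
            rw [hWhTWh]
        _ = Wh * (Matrix.diagonal Ji * Whᵀ) := by rw [hDkey]
        _ = Wh * Matrix.diagonal Di * Whᵀ := by rw [← Matrix.mul_assoc, hWhJi]
        _ = Pri := hPridef.symm
    have h1mPri : (1 - Pri).PosSemidef := psd_one_sub_proj hPrisym hPri2
    have htrPPri_le : (P * Pri).trace ≤ (m : ℝ) := by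
      have hge := trace_mul_psd_nonneg hPpsd h1mPri
      have heq : P * (1 - Pri) = P - P * Pri := by rw [Matrix.mul_sub, Matrix.mul_one]
      rw [heq, Matrix.trace_sub, htrP] at hge
      linarith
    have htrPPri_eq : (P * Pri).trace
        = ∑ b : Fin (d i), (sc ⟨i,b⟩)^2 * Q ⟨i,b⟩ ⟨i,b⟩ := by
      have e1 : P * Pri = (P * Wh * Matrix.diagonal Di) * Whᵀ := by
        rw [hPridef]; simp only [Matrix.mul_assoc]
      rw [e1, Matrix.trace_mul_comm]
      have e2 : Whᵀ * (P * Wh * Matrix.diagonal Di) = (Whᵀ * P * Wh) * Matrix.diagonal Di := by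
        simp only [Matrix.mul_assoc]
      rw [e2]
      have e3 : Whᵀ * P * Wh = Matrix.diagonal sc * (Q * Matrix.diagonal sc) := by
        rw [hWhT, hWhdef, hQdef]; simp only [Matrix.mul_assoc]
      have e4 : ((Whᵀ * P * Wh) * Matrix.diagonal Di).trace
          = ∑ q : (Σ j, Fin (d j)), (Whᵀ * P * Wh) q q * Di q := by
        rw [Matrix.trace]
        refine Finset.sum_congr rfl fun q _ => ?_
        rw [Matrix.diag]
        exact Matrix.mul_diagonal _ _ _ _
      rw [e4]
      rw [sigma_block_sum i _ (fun p hp => by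
        rw [show Di p = 0 from if_neg hp, mul_zero])]
      refine Finset.sum_congr rfl fun b _ => ?_
      rw [show Di ⟨i,b⟩ = 1 from if_pos rfl, mul_one, e3,
        Matrix.diagonal_mul, Matrix.mul_diagonal]
      ring
    -- LP application
    set qq : ℕ → ℝ := fun r =>
      if h : r < d i then (sc ⟨i,⟨r,h⟩⟩)^2 * Q ⟨i,⟨r,h⟩⟩ ⟨i,⟨r,h⟩⟩ else 0 with hqqdef
    have hqsum : (∑ r ∈ Finset.range (d i), qq r)
        = ∑ b : Fin (d i), (sc ⟨i,b⟩)^2 * Q ⟨i,b⟩ ⟨i,b⟩ := by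
      rw [← Fin.sum_univ_eq_sum_range qq (d i)]
      refine Finset.sum_congr rfl fun b _ => ?_
      simp only [hqqdef, dif_pos b.isLt, Fin.eta]
    have hlp := lp_bound (d i) m (fun r => (lamN d lam i r)^2) qq
      (fun r => sq_nonneg _)
      (fun r s hrs => by
        have h1 := lamN_antitone d lam hpos hdec i r s hrs
        have h2 := lamN_nonneg d lam hpos i s
        nlinarith)
      (fun r => by
        simp only [hqqdef]
        split
        · exact mul_nonneg (sq_nonneg _) (hQd0 _)
        · exact le_refl 0)
      (fun r => by
        simp only [hqqdef]
        split
        · next h =>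
          by_cases hl : lam i ⟨r, h⟩ = 0
          · rw [hscdef]
            simp [hl]
          · have hQle := hQWle ⟨i, ⟨r, h⟩⟩
            rw [show lamN d lam i r = lam i ⟨r,h⟩ from dif_pos h] at hQle
            have hlpos : 0 < lam i ⟨r,h⟩ := lt_of_le_of_ne (hpos i _) (Ne.symm hl)
            have hsc : sc ⟨i,⟨r,h⟩⟩ = (lam i ⟨r,h⟩)⁻¹ := if_neg hl
            rw [hsc]
            calc ((lam i ⟨r,h⟩)⁻¹)^2 * Q ⟨i,⟨r,h⟩⟩ ⟨i,⟨r,h⟩⟩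
                ≤ ((lam i ⟨r,h⟩)⁻¹)^2 * (lam i ⟨r,h⟩)^2 :=
                  mul_le_mul_of_nonneg_left hQle (sq_nonneg _)
              _ = 1 := by field_simp
        · exact zero_le_one)
      (by rw [hqsum, ← htrPPri_eq]; exact htrPPri_le)
    have hlhs : (∑ r ∈ Finset.range (d i), (lamN d lam i r)^2 * qq r)
        = ∑ b : Fin (d i), Q ⟨i,b⟩ ⟨i,b⟩ := by
      rw [← Fin.sum_univ_eq_sum_range (fun r => (lamN d lam i r)^2 * qq r) (d i)]
      refine Finset.sum_congr rfl fun b _ => ?_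
      simp only [hqqdef, dif_pos b.isLt, Fin.eta]
      rw [show lamN d lam i (b:ℕ) = lam i b from by rw [lamN, dif_pos b.isLt]]
      by_cases hl : lam i b = 0
      · have hQ0 : Q ⟨i,b⟩ ⟨i,b⟩ = 0 := by
          have h1 := hQWle ⟨i,b⟩
          rw [show lamN d lam ((⟨i,b⟩ : Σ j, Fin (d j)).1) ((⟨i,b⟩ : Σ j, Fin (d j)).2 : ℕ)
            = lam i b from by rw [lamN, dif_pos b.isLt]] at h1
          have h2 := hQd0 ⟨i,b⟩
          nlinarith
        rw [hQ0]
        ring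
      · rw [hscdef]
        simp only [hl, if_neg, ite_false]
        have hlpos : 0 < lam i b := lt_of_le_of_ne (hpos i b) (Ne.symm hl)
        field_simp
    have hrhs : (∑ r ∈ Finset.range (min m (d i)), (lamN d lam i r)^2)
        ≤ ∑ r ∈ Finset.range m, (lamN d lam i r)^2 := by
      refine Finset.sum_le_sum_of_subset_of_nonneg
        (Finset.range_subset_range.mpr (min_le_left _ _)) fun r _ _ => sq_nonneg _
    rw [hlhs] at hlp
    linarith
  -- assemble
  have htrQ : (hA.sqrt * Rzero d U lam * hA.sqrt * P).trace = Q.trace := by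
    rw [← hSdef, ← hWWT, hQdef, Matrix.trace_mul_cycle (Wᵀ) P W]
  rw [htrQ, Matrix.trace]
  have hsig : (∑ q : (Σ j, Fin (d j)), Q.diag q)
      = ∑ i : Fin k, ∑ b : Fin (d i), Q ⟨i,b⟩ ⟨i,b⟩ := sigma_sum _
  rw [hsig]
  calc (∑ i : Fin k, ∑ b : Fin (d i), Q ⟨i,b⟩ ⟨i,b⟩)
      ≤ ∑ i : Fin k, ∑ r ∈ Finset.range m, (lamN d lam i r)^2 :=
        Finset.sum_le_sum fun i _ => hblockbound i
    _ = ∑ r ∈ Finset.range m, nuF d lam r := by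
        rw [Finset.sum_comm]
        rfl

end Setting5

section Setting6

variable {k : ℕ} (d : Fin k → ℕ) (U : ∀ i, Matrix (Fin (d i)) (Fin (d i)) ℝ)
  (lam : ∀ i, Fin (d i) → ℝ)

private lemma trace_A_R0 (hU : ∀ i, U i * (U i)ᵀ = 1) (hpos : ∀ i j, 0 ≤ lam i j)
    (A : Matrix (Σ i, Fin (d i)) (Σ i, Fin (d i)) ℝ)
    (hblocks : ∀ i (a b : Fin (d i)), A ⟨i, a⟩ ⟨i, b⟩ = Rmax d U lam ⟨i, a⟩ ⟨i, b⟩) :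
    (A * Rzero d U lam).trace = ∑ r ∈ Finset.range (nn d), nuF d lam r := by
  rw [← CCT d U lam hU]
  rw [show A * (Cmat d U lam * (Cmat d U lam)ᵀ) = (A * Cmat d U lam) * (Cmat d U lam)ᵀ from by
    simp only [Matrix.mul_assoc]]
  rw [Matrix.trace_mul_comm]
  rw [show (Cmat d U lam)ᵀ * (A * Cmat d U lam) = (Cmat d U lam)ᵀ * A * Cmat d U lam from by
    simp only [Matrix.mul_assoc]]
  have h1 : ((Cmat d U lam)ᵀ * A * Cmat d U lam).trace
      = ∑ q : Σ i, Fin (d i), ((Cmat d U lam)ᵀ * A * Cmat d U lam) q q := rfl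
  rw [h1, sigma_sum]
  rw [← sum_lam_sq d lam]
  refine Finset.sum_congr rfl fun i _ => Finset.sum_congr rfl fun b _ => ?_
  have h := CAC d U lam hU hpos A hblocks i b b
  rw [if_pos rfl] at h
  exact h

private lemma trace_msqrt_A_ge (hU : ∀ i, U i * (U i)ᵀ = 1) (hpos : ∀ i j, 0 ≤ lam i j)
    (hdec : ∀ i, ∀ r s : Fin (d i), r ≤ s → lam i s ≤ lam i r)
    (A : Matrix (Σ i, Fin (d i)) (Σ i, Fin (d i)) ℝ) (hA : A.PosSemidef)
    (hblocks : ∀ i (a b : Fin (d i)), A ⟨i, a⟩ ⟨i, b⟩ = Rmax d U lam ⟨i, a⟩ ⟨i, b⟩) :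
    (∑ r ∈ Finset.range (nn d), Real.sqrt (nuF d lam r))
      ≤ (msqrt (msqrt A * Rzero d U lam * msqrt A)).trace := by
  classical
  rw [msqrt_eq hA]
  set S := hA.sqrt with hSdef
  set N := S * Rzero d U lam * S with hNdef
  have hR0 := Rzero_psd d U lam hU
  have hNpsd : N.PosSemidef := by
    have h := hR0.mul_mul_conjTranspose_same S
    rwa [hA.posSemidef_sqrt.1] at h
  rw [msqrt_eq hNpsd]
  set eig := hNpsd.1.eigenvalues with heig
  set V : Matrix (Σ i, Fin (d i)) (Σ i, Fin (d i)) ℝ := ↑hNpsd.1.eigenvectorUnitary with hV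
  have hVV' : star V * V = 1 := Matrix.mem_unitaryGroup_iff'.mp hNpsd.1.eigenvectorUnitary.2
  have hVV : V * star V = 1 := Matrix.mem_unitaryGroup_iff.mp hNpsd.1.eigenvectorUnitary.2
  have hid : (RCLike.ofReal ∘ eig : (Σ i, Fin (d i)) → ℝ) = eig := by
    funext q; simp
  have hspec' : N = V * Matrix.diagonal eig * star V := by
    conv_lhs => rw [hNpsd.1.spectral_theorem]
    rw [hid, Unitary.conjStarAlgAut_apply]
  have heig0 : ∀ q, 0 ≤ eig q := hNpsd.eigenvalues_nonneg
  -- trace of sqrt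
  have htr : (hNpsd.sqrt).trace = ∑ q : Σ i, Fin (d i), Real.sqrt (eig q) := by
    show (V * Matrix.diagonal (Real.sqrt ∘ eig) * star V).trace = _
    rw [Matrix.trace_mul_cycle, hVV', one_mul, Matrix.trace_diagonal]
    rfl
  -- sorting
  have e : (Σ i, Fin (d i)) ≃ Fin (nn d) := Fintype.equivFin _
  set f : Fin (nn d) → ℝ := fun t => eig (e.symm t) with hf
  set σp := Tuple.sort f with hσp
  set κfin : Fin (nn d) → ℝ := fun t => f (σp t.rev) with hκfin
  set κ : ℕ → ℝ := fun t => if h : t < nn d then κfin ⟨t, h⟩ else 0 with hκ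
  have hκ0 : ∀ t, 0 ≤ κ t := by
    intro t
    simp only [hκ]
    split
    · exact heig0 _
    · exact le_refl 0
  have hκmono : ∀ r s : ℕ, r ≤ s → κ s ≤ κ r := by
    intro r s hrs
    simp only [hκ]
    by_cases hs : s < nn d
    · have hr : r < nn d := lt_of_le_of_lt hrs hs
      rw [dif_pos hs, dif_pos hr]
      have hrev : (⟨s, hs⟩ : Fin (nn d)).rev ≤ (⟨r, hr⟩ : Fin (nn d)).rev := by
        rw [Fin.rev_le_rev]
        exact hrs
      exact Tuple.monotone_sort f hrev
    · rw [dif_neg hs]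
      split
      · exact heig0 _
      · exact le_refl 0
  have hκn : ∀ t, nn d ≤ t → κ t = 0 := fun t ht => dif_neg (not_lt.mpr ht)
  -- general reindexing
  have hgen : ∀ φ : ℝ → ℝ,
      (∑ q : Σ i, Fin (d i), φ (eig q)) = ∑ t ∈ Finset.range (nn d), φ (κ t) := by
    intro φ
    calc (∑ q : Σ i, Fin (d i), φ (eig q))
        = ∑ t : Fin (nn d), φ (f t) := (Equiv.sum_comp e.symm (fun q => φ (eig q))).symm
      _ = ∑ t : Fin (nn d), φ (f ((Fin.revPerm.trans σp) t)) :=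
          (Equiv.sum_comp (Fin.revPerm.trans σp) (fun t => φ (f t))).symm
      _ = ∑ t : Fin (nn d), φ (κ (t : ℕ)) := by
          refine Finset.sum_congr rfl fun t _ => ?_
          congr 1
          simp only [hκ, dif_pos t.isLt, hκfin, Fin.eta]
          rfl
      _ = ∑ t ∈ Finset.range (nn d), φ (κ t) :=
          Fin.sum_univ_eq_sum_range (fun t => φ (κ t)) _
  have hsum_eig : N.trace = ∑ q : Σ i, Fin (d i), eig q := by
    conv_lhs => rw [hspec']
    rw [Matrix.trace_mul_cycle, hVV', one_mul, Matrix.trace_diagonal]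
  have htrN : N.trace = ∑ r ∈ Finset.range (nn d), nuF d lam r := by
    rw [hNdef, Matrix.trace_mul_cycle, hSdef, hA.sqrt_mul_self]
    exact trace_A_R0 d U lam hU hpos A hblocks
  have htotκ : (∑ t ∈ Finset.range (nn d), κ t) = ∑ t ∈ Finset.range (nn d), nuF d lam t := by
    have h := hgen id
    simp only [id] at h
    rw [← h, ← hsum_eig]
    exact htrN
  -- majorization
  have hmaj : ∀ m, (∑ t ∈ Finset.range m, κ t) ≤ ∑ t ∈ Finset.range m, nuF d lam t := by
    intro m
    rcases le_or_gt (nn d) m with hm | hm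
    · have h1 : (∑ t ∈ Finset.range m, κ t) = ∑ t ∈ Finset.range (nn d), κ t :=
        (Finset.sum_subset (Finset.range_subset_range.mpr hm) fun t _ ht =>
          hκn t (by simpa using ht)).symm
      have h2 : (∑ t ∈ Finset.range (nn d), nuF d lam t) ≤ ∑ t ∈ Finset.range m, nuF d lam t :=
        Finset.sum_le_sum_of_subset_of_nonneg (Finset.range_subset_range.mpr hm)
          (fun t _ _ => nuF_nonneg d lam t)
      rw [h1, htotκ]
      exact h2
    · set emb : Fin m → (Σ i, Fin (d i)) :=
        fun t => e.symm (σp (Fin.castLE hm.le t).rev) with hembdef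
      have hinj : Function.Injective emb := by
        intro a b hab
        simp only [hembdef] at hab
        exact Fin.castLE_injective _ (Fin.rev_injective (σp.injective (e.symm.injective hab)))
      set Tm : Finset (Σ i, Fin (d i)) := Finset.image emb Finset.univ with hTm
      set χ : (Σ i, Fin (d i)) → ℝ := fun q => if q ∈ Tm then 1 else 0 with hχ
      have hχχ : (fun q => χ q * χ q) = χ := by
        funext q
        simp only [hχ]
        split <;> simp
      set P := V * Matrix.diagonal χ * star V with hP
      have hstar : star V = Vᵀ := by rw [Matrix.star_eq_conjTranspose, conjT_eq_T]
      have hPsym : Pᴴ = P := by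
        rw [hP, hstar]
        exact sym_sandwich V χ
      have hPP : P * P = P := by
        calc P * P
            = V * (Matrix.diagonal χ * ((star V * V) * Matrix.diagonal χ)) * star V := by
              rw [hP]; simp only [Matrix.mul_assoc]
          _ = V * (Matrix.diagonal χ * Matrix.diagonal χ) * star V := by
              rw [hVV', one_mul]
          _ = P := by rw [Matrix.diagonal_mul_diagonal, hχχ, hP]
      have hPpsd : P.PosSemidef := by
        have h1 : P = P * Pᴴ := by rw [hPsym, hPP]
        rw [h1]
        exact posSemidef_self_mul_conjTranspose P
      have htrP : P.trace = (m : ℝ) := by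
        rw [hP, Matrix.trace_mul_cycle, hVV', one_mul, Matrix.trace_diagonal]
        have h1 : ∀ q, χ q = if q ∈ Tm then (1:ℝ) else 0 := fun q => rfl
        rw [Finset.sum_congr rfl fun q _ => h1 q, Finset.sum_ite_mem, Finset.univ_inter,
          Finset.sum_const, hTm, Finset.card_image_of_injective _ hinj]
        simp
      have hNP : (N * P).trace = ∑ t ∈ Finset.range m, κ t := by
        calc (N * P).trace
            = (V * Matrix.diagonal eig * star V * (V * Matrix.diagonal χ * star V)).trace := by
              rw [← hspec', ← hP]
          _ = (V * (Matrix.diagonal eig * ((star V * V) * Matrix.diagonal χ)) * star V).trace := by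
              simp only [Matrix.mul_assoc]
          _ = (V * (Matrix.diagonal eig * Matrix.diagonal χ) * star V).trace := by
              rw [hVV', one_mul]
          _ = ((Matrix.diagonal eig * Matrix.diagonal χ)).trace := by
              rw [Matrix.trace_mul_cycle, hVV', one_mul]
          _ = ∑ q : Σ i, Fin (d i), eig q * χ q := by
              rw [Matrix.diagonal_mul_diagonal, Matrix.trace_diagonal]
          _ = ∑ q : Σ i, Fin (d i), (if q ∈ Tm then eig q else 0) := by
              refine Finset.sum_congr rfl fun q _ => ?_
              simp only [hχ]
              split <;> simp
          _ = ∑ q ∈ Tm, eig q := by rw [Finset.sum_ite_mem, Finset.univ_inter]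
          _ = ∑ t : Fin m, eig (emb t) := by
              rw [hTm, Finset.sum_image (fun x _ y _ h => hinj h)]
          _ = ∑ t : Fin m, κ (t : ℕ) := by
              refine Finset.sum_congr rfl fun t _ => ?_
              have hlt : (t : ℕ) < nn d := lt_of_lt_of_le t.isLt hm.le
              simp only [hembdef, hκ, dif_pos hlt, hκfin, hf]
              rfl
          _ = ∑ t ∈ Finset.range m, κ t := Fin.sum_univ_eq_sum_range (fun t => κ t) m
      rw [← hNP]
      have hNPval : N * P = hA.sqrt * Rzero d U lam * hA.sqrt * P := by rw [hNdef, hSdef]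
      rw [hNPval]
      exact maj_bound d U lam hU hpos hdec A hA hblocks P hPsym hPP hPpsd m htrP
  have hfinal := schur_sqrt κ (nuF d lam) (nn d) hκ0 (fun t => nuF_nonneg d lam t) hκmono hκn
    (fun t ht => nuF_vanish d lam t ht) hmaj htotκ
  rw [htr, hgen Real.sqrt]
  exact hfinal

end Setting6

/-- Among all `A ∈ Γ(R₁₁,…,R_kk)` (PSD matrices with prescribed diagonal blocks), the
matrix `R_m` maximizes the Bures-Wasserstein distance to `R₀ = diag(R₁₁,…,R_kk)`:
`d_W(A, R₀) ≤ d_W(R_m, R₀)`. -/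
theorem dW_le_dW_Rmax_Rzero {k : ℕ} (d : Fin k → ℕ) (hd : Monotone d)
    (U : ∀ i, Matrix (Fin (d i)) (Fin (d i)) ℝ)
    (hU : ∀ i, U i * (U i)ᵀ = 1)
    (lam : ∀ i, Fin (d i) → ℝ) (hpos : ∀ i j, 0 ≤ lam i j)
    (hdec : ∀ i, ∀ r s : Fin (d i), r ≤ s → lam i s ≤ lam i r)
    (A : Matrix (Σ i, Fin (d i)) (Σ i, Fin (d i)) ℝ) (hA : A.PosSemidef)
    (hblocks : ∀ i (a b : Fin (d i)), A ⟨i, a⟩ ⟨i, b⟩ = Rmax d U lam ⟨i, a⟩ ⟨i, b⟩) :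
    Real.sqrt (dWsq A (Rzero d U lam)) ≤
      Real.sqrt (dWsq (Rmax d U lam) (Rzero d U lam)) := by
  classical
  have htrA : A.trace = (Rmax d U lam).trace := by
    have h1 : A.trace = ∑ q : Σ i, Fin (d i), A q q := rfl
    have h2 : (Rmax d U lam).trace = ∑ q : Σ i, Fin (d i), Rmax d U lam q q := rfl
    rw [h1, h2, sigma_sum (fun q => A q q), sigma_sum (fun q => Rmax d U lam q q)]
    exact Finset.sum_congr rfl fun i _ => Finset.sum_congr rfl fun a _ => hblocks i a a
  have hEQ := trace_msqrt_Rm d U lam hU hpos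
  have hLB := trace_msqrt_A_ge d U lam hU hpos hdec A hA hblocks
  apply Real.sqrt_le_sqrt
  rw [dWsq, dWsq, htrA, hEQ]
  linarith [hLB]
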